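/- arXiv:2512.08601 — 3 statements merged into one kernel-verified Lean document; each statement's English description precedes it below -/
import Mathlib

section
/- Let (S, A, p, r) be a finite undiscounted MDP with a distinguished absorbing state s∞ satisfying p(s∞|s∞,a)=1 and r(s∞,a)=0 for all a, such that the state space admits a partition S = S₀ ⊔ S₁ ⊔ ⋯ ⊔ S_d ⊔ {s∞} with the property that for every l, every s ∈ S_l, and every action a, p(s'|s,a) > 0 only if s' ∈ S_{l+1} ⊔ ⋯ ⊔ S_d ⊔ {s∞}. Fix a strictly-positive decreasing sequence τ₀ ≥ τ₁ ≥ ⋯ ≥ τ_d ≥ τ∞ > 0, define τ(s) = τ_l for s ∈ S_l and τ(s∞) = τ∞, and let γ^τ = max over l of τ_{l+1}/τ_l (identifying index d+1 with ∞). Define the weighted sup-norm ‖V‖_∞^τ = max over s of |V(s)|/τ(s) on the space V_S⁰ of functions V : S → ℝ with V(s∞) = 0, and let B be the undiscounted Bellman map (BV)(s) = max over a of (r(s,a) + Σ_{s'} p(s'|s,a) V(s')). Then if γ^τ < 1, B maps V_S⁰ to itself and is a contraction of modulus γ^τ with respect to ‖·‖_∞^τ. -/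
/-- In a finite undiscounted MDP with absorbing zero-reward state `sInf`
and a layered state space (layer of `sInf` is `d+1`, other layers `≤ d`, transitions
strictly increase the layer), with strictly positive decreasing weights `τ` whose
maximal consecutive ratio `γ` is `< 1`, the undiscounted Bellman map preserves
`{V | V sInf = 0}` and is a `γ`-contraction in the `τ`-weighted sup-norm. -/
theorem stmt0
    {S A : Type} [Fintype S] [Fintype A] [Nonempty S] [Nonempty A]
    (p : S → A → S → ℝ) (r : S → A → ℝ) (sInf : S)
    (d : ℕ) (lay : S → ℕ) (τ : ℕ → ℝ) (γ : ℝ)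
    (hp0 : ∀ s a s', 0 ≤ p s a s')
    (hp1 : ∀ s a, ∑ s', p s a s' = 1)
    (habs : ∀ a, p sInf a sInf = 1)
    (hrInf : ∀ a, r sInf a = 0)
    (hlayInf : lay sInf = d + 1)
    (hlay : ∀ s, s ≠ sInf → lay s ≤ d)
    (hstep : ∀ s a s', s ≠ sInf → 0 < p s a s' → lay s < lay s')
    (hτpos : ∀ l, l ≤ d + 1 → 0 < τ l)
    (hτdec : ∀ l, l ≤ d → τ (l + 1) ≤ τ l)
    (hγdef : γ = (Finset.range (d + 1)).sup' (by simp) fun l => τ (l + 1) / τ l)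
    (hγ : γ < 1) :
    (∀ V : S → ℝ, V sInf = 0 →
        (Finset.univ.sup' Finset.univ_nonempty fun a : A =>
          r sInf a + ∑ s', p sInf a s' * V s') = 0) ∧
    (∀ V W : S → ℝ, V sInf = 0 → W sInf = 0 →
        (Finset.univ.sup' Finset.univ_nonempty fun s : S =>
            |(Finset.univ.sup' Finset.univ_nonempty fun a : A =>
                r s a + ∑ s', p s a s' * V s') -
              (Finset.univ.sup' Finset.univ_nonempty fun a : A =>
                r s a + ∑ s', p s a s' * W s')| / τ (lay s)) ≤
          γ * Finset.univ.sup' Finset.univ_nonempty fun s : S => |V s - W s| / τ (lay s)) := by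
  classical
  have hγ0 : 0 ≤ γ := by
    rw [hγdef]
    refine le_trans ?_ (Finset.le_sup' _ (by simp : (0:ℕ) ∈ Finset.range (d+1)))
    exact div_nonneg (le_of_lt (hτpos 1 (by omega))) (le_of_lt (hτpos 0 (by omega)))
  have hτall : ∀ s : S, 0 < τ (lay s) := by
    intro s
    by_cases h : s = sInf
    · subst h; rw [hlayInf]; exact hτpos _ le_rfl
    · exact hτpos _ (le_trans (hlay s h) (Nat.le_succ d))
  have hmono : ∀ j, j ≤ d + 1 → ∀ i, i ≤ j → τ j ≤ τ i := by
    intro j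
    induction j with
    | zero =>
      intro _ i hi
      obtain rfl : i = 0 := Nat.le_zero.mp hi
      exact le_rfl
    | succ n ih =>
      intro hj i hi
      rcases Nat.eq_or_lt_of_le hi with rfl | h
      · exact le_rfl
      · exact le_trans (hτdec n (by omega)) (ih (by omega) i (by omega))
  have hpart1 : ∀ V : S → ℝ, V sInf = 0 →
      (Finset.univ.sup' Finset.univ_nonempty fun a : A =>
        r sInf a + ∑ s', p sInf a s' * V s') = 0 := by
    intro V hV
    have hterm : ∀ a : A, r sInf a + ∑ s', p sInf a s' * V s' = 0 := by
      intro a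
      have hz : ∀ s' : S, s' ≠ sInf → p sInf a s' = 0 := by
        intro s' hs'
        have hsum : ∑ x ∈ Finset.univ.erase sInf, p sInf a x = 0 := by
          have h := Finset.add_sum_erase Finset.univ (p sInf a) (Finset.mem_univ sInf)
          have h1 := hp1 sInf a
          have h2 := habs a
          linarith
        exact (Finset.sum_eq_zero_iff_of_nonneg (fun x _ => hp0 sInf a x)).mp hsum s'
          (Finset.mem_erase.mpr ⟨hs', Finset.mem_univ s'⟩)
      have hzsum : ∑ s', p sInf a s' * V s' = 0 := by
        apply Finset.sum_eq_zero
        intro s' _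
        by_cases h : s' = sInf
        · rw [h, hV, mul_zero]
        · rw [hz s' h, zero_mul]
      rw [hzsum, hrInf a, add_zero]
    apply le_antisymm
    · exact Finset.sup'_le _ _ fun a _ => le_of_eq (hterm a)
    · exact le_trans (le_of_eq (hterm (Classical.arbitrary A)).symm)
        (Finset.le_sup' (f := fun a : A => r sInf a + ∑ s', p sInf a s' * V s')
          (Finset.mem_univ (Classical.arbitrary A)))
  refine ⟨hpart1, ?_⟩
  intro V W hV hW
  set N : ℝ := Finset.univ.sup' Finset.univ_nonempty fun s : S => |V s - W s| / τ (lay s) with hN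
  have hN0 : 0 ≤ N := by
    refine le_trans ?_ (Finset.le_sup' _ (Finset.mem_univ (Classical.arbitrary S)))
    exact div_nonneg (abs_nonneg _) (le_of_lt (hτall _))
  apply Finset.sup'_le
  intro s _
  rw [div_le_iff₀ (hτall s)]
  by_cases hs : s = sInf
  · subst hs
    rw [hpart1 V hV, hpart1 W hW, sub_zero, abs_zero]
    exact mul_nonneg (mul_nonneg hγ0 hN0) (le_of_lt (hτall _))
  · -- per-action bound
    have key : ∀ a : A, |(∑ s', p s a s' * V s') - (∑ s', p s a s' * W s')| ≤ γ * N * τ (lay s) := by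
      intro a
      have hC0 : 0 ≤ γ * N * τ (lay s) := mul_nonneg (mul_nonneg hγ0 hN0) (le_of_lt (hτall s))
      rw [← Finset.sum_sub_distrib]
      refine le_trans (Finset.abs_sum_le_sum_abs _ _) ?_
      have hterm : ∀ s' : S, |p s a s' * V s' - p s a s' * W s'| ≤ p s a s' * (γ * N * τ (lay s)) := by
        intro s'
        rw [← mul_sub, abs_mul, abs_of_nonneg (hp0 s a s')]
        rcases lt_or_eq_of_le (hp0 s a s') with hp | hp
        · apply mul_le_mul_of_nonneg_left _ (le_of_lt hp)
          -- |V s' - W s'| ≤ γ * N * τ (lay s)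
          have hls' : lay s' ≤ d + 1 := by
            by_cases h : s' = sInf
            · rw [h, hlayInf]
            · exact le_trans (hlay s' h) (Nat.le_succ d)
          have hstep' : lay s + 1 ≤ lay s' := hstep s a s' hs hp
          have h1 : τ (lay s') ≤ τ (lay s + 1) := hmono (lay s') hls' (lay s + 1) hstep'
          have h2 : τ (lay s + 1) ≤ γ * τ (lay s) := by
            have : τ (lay s + 1) / τ (lay s) ≤ γ := by
              rw [hγdef]
              exact Finset.le_sup' (f := fun l => τ (l + 1) / τ l) (Finset.mem_range.mpr (by omega : lay s < d + 1))
            rwa [div_le_iff₀ (hτall s)] at this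
          have h3 : |V s' - W s'| ≤ τ (lay s') * N := by
            have := Finset.le_sup' (f := fun s : S => |V s - W s| / τ (lay s))
              (Finset.mem_univ s')
            rw [← hN] at this
            calc |V s' - W s'| = (|V s' - W s'| / τ (lay s')) * τ (lay s') :=
                  (div_mul_cancel₀ _ (ne_of_gt (hτall s'))).symm
              _ ≤ N * τ (lay s') := mul_le_mul_of_nonneg_right this (le_of_lt (hτall s'))
              _ = τ (lay s') * N := mul_comm _ _
          calc |V s' - W s'| ≤ τ (lay s') * N := h3
            _ ≤ (γ * τ (lay s)) * N := mul_le_mul_of_nonneg_right (le_trans h1 h2) hN0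
            _ = γ * N * τ (lay s) := by ring
        · rw [← hp, zero_mul, zero_mul]
      refine le_trans (Finset.sum_le_sum fun s' _ => hterm s') ?_
      rw [← Finset.sum_mul, hp1 s a, one_mul]
    -- sup difference bound
    have hBV : ∀ f g : A → ℝ, (∀ a, f a ≤ g a + γ * N * τ (lay s)) →
        Finset.univ.sup' Finset.univ_nonempty f ≤
          Finset.univ.sup' Finset.univ_nonempty g + γ * N * τ (lay s) := by
      intro f g h
      apply Finset.sup'_le
      intro a _
      exact le_trans (h a) (add_le_add_left (Finset.le_sup' g (Finset.mem_univ a)) _)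
    rw [abs_sub_le_iff]
    constructor
    · have h := hBV (fun a => r s a + ∑ s', p s a s' * V s')
        (fun a => r s a + ∑ s', p s a s' * W s')
        (fun a => by have h := abs_sub_le_iff.mp (key a); linarith [h.1])
      linarith
    · have h := hBV (fun a => r s a + ∑ s', p s a s' * W s')
        (fun a => r s a + ∑ s', p s a s' * V s')
        (fun a => by have h := abs_sub_le_iff.mp (key a); linarith [h.2])
      linarith
end

section
/- Let (V, ‖·‖) be a normed space, let B : V → V, let Π : V → V, and suppose the composition ΠB is a contraction of modulus γ < 1. Let V* be a fixed point of B (i.e., BV* = V*). Then ΠB has a unique fixed point Ṽ*, the iterates (ΠB)^t V₀ converge to Ṽ* for any V₀, and ‖Ṽ* − ΠV*‖ ≤ (γ/(1−γ)) · ‖V* − ΠV*‖. In particular, if ΠV* = V* then Ṽ* = V*. -/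
/-- If `Π ∘ B` is a `γ`-contraction (`γ < 1`) on a complete normed space and
`V*` is a fixed point of `B`, then `Π ∘ B` has a unique fixed point `Ṽ*`, the iterates
`(ΠB)^t V₀` converge to `Ṽ*` for any `V₀`, and
`‖Ṽ* − ΠV*‖ ≤ (γ/(1−γ))·‖V* − ΠV*‖`; in particular `ΠV* = V*` implies `Ṽ* = V*`. -/
theorem stmt3
    {V : Type*} [NormedAddCommGroup V] [CompleteSpace V]
    (B Pr : V → V) (γ : ℝ) (hγ0 : 0 ≤ γ) (hγ1 : γ < 1)
    (hcontr : ∀ x y, ‖Pr (B x) - Pr (B y)‖ ≤ γ * ‖x - y‖)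
    (Vstar : V) (hfix : B Vstar = Vstar) :
    ∃ Vt : V, Pr (B Vt) = Vt ∧
      (∀ W, Pr (B W) = W → W = Vt) ∧
      (∀ V0, Filter.Tendsto (fun t => (fun x => Pr (B x))^[t] V0) Filter.atTop (nhds Vt)) ∧
      ‖Vt - Pr Vstar‖ ≤ γ / (1 - γ) * ‖Vstar - Pr Vstar‖ ∧
      (Pr Vstar = Vstar → Vt = Vstar) := by
  set f : V → V := fun x => Pr (B x) with hf
  have hlip : LipschitzWith ⟨γ, hγ0⟩ f := by
    apply LipschitzWith.of_dist_le_mul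
    intro x y
    rw [dist_eq_norm, dist_eq_norm]; exact hcontr x y
  have hc : ContractingWith ⟨γ, hγ0⟩ f := ⟨by exact_mod_cast hγ1, hlip⟩
  refine ⟨hc.fixedPoint f, hc.fixedPoint_isFixedPt, ?_, fun V0 => hc.tendsto_iterate_fixedPoint V0, ?_, ?_⟩
  · intro W hW
    exact hc.fixedPoint_unique hW
  · set Vt := hc.fixedPoint f
    have hVt : f Vt = Vt := hc.fixedPoint_isFixedPt
    have h1 : ‖Vt - Pr Vstar‖ ≤ γ * ‖Vt - Vstar‖ := by
      have := hcontr Vt Vstar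
      rw [hfix] at this
      calc ‖Vt - Pr Vstar‖ = ‖Pr (B Vt) - Pr Vstar‖ := by conv_lhs => rw [← hVt]
        _ ≤ γ * ‖Vt - Vstar‖ := this
    have h2 : ‖Vt - Vstar‖ ≤ ‖Vt - Pr Vstar‖ + ‖Vstar - Pr Vstar‖ := by
      have := norm_sub_le_norm_sub_add_norm_sub Vt (Pr Vstar) Vstar
      calc ‖Vt - Vstar‖ ≤ ‖Vt - Pr Vstar‖ + ‖Pr Vstar - Vstar‖ := this
        _ = ‖Vt - Pr Vstar‖ + ‖Vstar - Pr Vstar‖ := by rw [norm_sub_rev (Pr Vstar)]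
    have h3 : (1 - γ) * ‖Vt - Pr Vstar‖ ≤ γ * ‖Vstar - Pr Vstar‖ := by nlinarith
    rw [div_mul_eq_mul_div, le_div_iff₀ (by linarith)]
    linarith
  · intro hP
    have hVt : f Vstar = Vstar := by simp [hf, hfix, hP]
    exact (hc.fixedPoint_unique hVt).symm
end

section
/- Let (V, ‖·‖) be a normed space, let T : V → V be a contraction of modulus γ < 1 with fixed point Ṽ*, and let (Ṽ_t) be a sequence in V whose one-step errors ε_t := ‖Ṽ_{t+1} − T Ṽ_t‖ satisfy ε_t → 0 as t → ∞. Then Ṽ_t → Ṽ* in norm. -/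
/-- Inexact iteration of a `γ`-contraction (`γ < 1`) with fixed point `Vt`:
if the one-step errors `‖Ṽ_{t+1} − T Ṽ_t‖` tend to `0`, then `Ṽ_t → Vt` in norm. -/
theorem stmt4
    {V : Type*} [NormedAddCommGroup V]
    (T : V → V) (γ : ℝ) (hγ0 : 0 ≤ γ) (hγ1 : γ < 1)
    (hcontr : ∀ x y, ‖T x - T y‖ ≤ γ * ‖x - y‖)
    (Vt : V) (hfix : T Vt = Vt)
    (seq : ℕ → V)
    (herr : Filter.Tendsto (fun t => ‖seq (t + 1) - T (seq t)‖) Filter.atTop (nhds 0)) :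
    Filter.Tendsto seq Filter.atTop (nhds Vt) := by
  rw [NormedAddCommGroup.tendsto_atTop]
  intro ε hε
  have h1γ : 0 < 1 - γ := by linarith
  have hδ : 0 < ε * (1 - γ) / 2 := by positivity
  obtain ⟨N, hN⟩ := (NormedAddCommGroup.tendsto_atTop.mp herr) (ε * (1 - γ) / 2) hδ
  set a : ℕ → ℝ := fun k => ‖seq (N + k) - Vt‖ with ha
  have key : ∀ k, a k ≤ γ ^ k * a 0 + ε / 2 := by
    intro k
    induction k with
    | zero => simp [a]; nlinarith [norm_nonneg (seq (N + 0) - Vt)]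
    | succ k ih =>
      have h1 : ‖seq (N + k + 1) - T (seq (N + k))‖ < ε * (1 - γ) / 2 := by
        have := hN (N + k) (Nat.le_add_right _ _)
        simpa [sub_zero, abs_of_nonneg (norm_nonneg _)] using this
      have h2 : ‖T (seq (N + k)) - Vt‖ ≤ γ * a k := by
        have := hcontr (seq (N + k)) Vt
        rwa [hfix] at this
      have h3 : a (k + 1) ≤ ‖seq (N + k + 1) - T (seq (N + k))‖ + ‖T (seq (N + k)) - Vt‖ := by
        have : seq (N + (k + 1)) - Vt =
            (seq (N + k + 1) - T (seq (N + k))) + (T (seq (N + k)) - Vt) := by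
          have : N + (k + 1) = N + k + 1 := by ring
          rw [this]; abel
        rw [ha]; dsimp only; rw [this]; exact norm_add_le _ _
      have ha0 : 0 ≤ a 0 := norm_nonneg _
      have : a (k + 1) ≤ γ ^ (k + 1) * a 0 + ε / 2 := by
        calc a (k + 1) ≤ ‖seq (N + k + 1) - T (seq (N + k))‖ + ‖T (seq (N + k)) - Vt‖ := h3
          _ ≤ ε * (1 - γ) / 2 + γ * a k := by linarith
          _ ≤ ε * (1 - γ) / 2 + γ * (γ ^ k * a 0 + ε / 2) := by nlinarith
          _ = γ ^ (k + 1) * a 0 + ε / 2 := by ring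
      exact this
  have hpow : Filter.Tendsto (fun k => γ ^ k * a 0) Filter.atTop (nhds 0) := by
    simpa using (tendsto_pow_atTop_nhds_zero_of_lt_one hγ0 hγ1).mul_const (a 0)
  obtain ⟨K, hK⟩ := (Metric.tendsto_atTop.mp hpow) (ε / 2) (by positivity)
  refine ⟨N + K, fun n hn => ?_⟩
  have hnN : N ≤ n := le_trans (Nat.le_add_right _ _) hn
  have heq : n = N + (n - N) := by omega
  have hKle : K ≤ n - N := by omega
  have hmono : γ ^ (n - N) ≤ γ ^ K := pow_le_pow_of_le_one hγ0 hγ1.le hKle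
  have hKbd : γ ^ K * a 0 < ε / 2 := by
    have := hK K le_rfl
    rw [Real.dist_eq, sub_zero, abs_of_nonneg (by positivity)] at this
    exact this
  have ha0 : 0 ≤ a 0 := norm_nonneg _
  have : a (n - N) < ε := by
    have := key (n - N)
    nlinarith [mul_le_mul_of_nonneg_right hmono ha0]
  calc ‖seq n - Vt‖ = a (n - N) := by rw [ha]; dsimp only; rw [← heq]
    _ < ε := this
end
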